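/- Let $0 \le a < 1$, $b > 0$ and $c > 0$. Then there exists a constant $C > 0$, independent of $t$, such that for all $t \ge 0$, $\int_0^t e^{-c(t-s)} (t-s)^{-a} (1+s)^{-b} \, ds \le C (1+t)^{-b}$. -/

import Mathlib

open Real

open MeasureTheory Set in
theorem stmt3 (a b c : ℝ) (ha0 : 0 ≤ a) (ha1 : a < 1) (hb : 0 < b) (hc : 0 < c) :
    ∃ C > (0:ℝ), ∀ t : ℝ, 0 ≤ t →
      ∫ s in (0:ℝ)..t, Real.exp (-c * (t - s)) * (t - s) ^ (-a) * (1 + s) ^ (-b)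
        ≤ C * (1 + t) ^ (-b) := by
  set ε : ℝ := min 1 (c / (2 * b)) with hεdef
  have hε : 0 < ε := lt_min one_pos (by positivity)
  have hε1 : ε ≤ 1 := min_le_left _ _
  have hεb : ε * b ≤ c / 2 := by
    have h2 : ε ≤ c / (2 * b) := min_le_right _ _
    calc ε * b ≤ (c / (2 * b)) * b := by nlinarith
      _ = c / 2 := by field_simp
  set K0 : ℝ := ε ^ (-b) with hK0def
  have hK0pos : 0 < K0 := rpow_pos_of_pos hε _
  have hψint : IntegrableOn (fun u : ℝ => u ^ (-a) * Real.exp (-(c/2) * u)) (Ioi 0) := by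
    simpa [Real.rpow_one, neg_mul] using integrableOn_rpow_mul_exp_neg_mul_rpow (s := -a) (p := 1)
      (b := c/2) (by linarith) one_pos (by linarith)
  set ψ : ℝ → ℝ := fun u => u ^ (-a) * Real.exp (-(c/2) * u) with hψdef
  set J : ℝ := ∫ u in Ioi (0:ℝ), ψ u with hJdef
  have hJnn : 0 ≤ J := setIntegral_nonneg measurableSet_Ioi fun u hu =>
    mul_nonneg (rpow_nonneg (le_of_lt hu) _) (exp_pos _).le
  refine ⟨K0 * J + 1, by positivity, fun t ht => ?_⟩
  have h1t : (0:ℝ) < 1 + t := by linarith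
  set f : ℝ → ℝ := fun s => Real.exp (-c * (t - s)) * (t - s) ^ (-a) * (1 + s) ^ (-b) with hfdef
  set g : ℝ → ℝ := fun s => (1 + t) ^ (-b) * (K0 * ψ (t - s)) with hgdef
  -- pointwise bound on Ioc 0 t
  have hpt : ∀ s ∈ Ioc (0:ℝ) t, f s ≤ g s := by
    intro s hs
    obtain ⟨hs0, hst⟩ := hs
    set u : ℝ := t - s with hudef
    have hu0 : 0 ≤ u := by simp [hudef]; linarith
    have h1s : (0:ℝ) < 1 + s := by linarith
    have h1u : (0:ℝ) < 1 + u := by linarith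
    -- key A : (1+s)^(-b) ≤ (1+t)^(-b) * (1+u)^b
    have hB : (1 + t) ^ b ≤ (1 + s) ^ b * (1 + u) ^ b := by
      rw [← mul_rpow h1s.le h1u.le]
      apply rpow_le_rpow h1t.le _ hb.le
      nlinarith
    have hA : (1 + s) ^ (-b) ≤ (1 + t) ^ (-b) * (1 + u) ^ b := by
      rw [rpow_neg h1s.le, rpow_neg h1t.le]
      have hApos : (0:ℝ) < (1 + s) ^ b := rpow_pos_of_pos h1s _
      have hBpos : (0:ℝ) < (1 + t) ^ b := rpow_pos_of_pos h1t _
      have h1 : (1 + t) ^ b / (1 + s) ^ b ≤ (1 + u) ^ b := by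
        rw [div_le_iff₀ hApos]
        calc (1 + t) ^ b ≤ (1 + s) ^ b * (1 + u) ^ b := hB
          _ = (1 + u) ^ b * (1 + s) ^ b := by ring
      calc ((1 + s) ^ b)⁻¹ = ((1 + t) ^ b)⁻¹ * ((1 + t) ^ b / (1 + s) ^ b) := by
            field_simp
        _ ≤ ((1 + t) ^ b)⁻¹ * (1 + u) ^ b :=
            mul_le_mul_of_nonneg_left h1 (by positivity)
    -- key B : (1+u)^b * exp (-c*u) ≤ K0 * exp (-(c/2)*u)
    have hexpb : (1 + u) ^ b * Real.exp (-c * u) ≤ K0 * Real.exp (-(c/2) * u) := by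
      have h2 : 1 + u ≤ ε⁻¹ * Real.exp (ε * u) := by
        have h3 : ε * u + 1 ≤ Real.exp (ε * u) := Real.add_one_le_exp _
        have h4 : ε * (1 + u) ≤ Real.exp (ε * u) := by nlinarith
        calc 1 + u = (ε * (1 + u)) / ε := by field_simp
          _ ≤ Real.exp (ε * u) / ε := by gcongr
          _ = ε⁻¹ * Real.exp (ε * u) := by ring
      have h5 : (1 + u) ^ b ≤ K0 * Real.exp (ε * u * b) := by
        calc (1 + u) ^ b ≤ (ε⁻¹ * Real.exp (ε * u)) ^ b := rpow_le_rpow h1u.le h2 hb.le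
          _ = ε⁻¹ ^ b * Real.exp (ε * u) ^ b := mul_rpow (by positivity) (exp_pos _).le
          _ = K0 * Real.exp (ε * u * b) := by
              rw [← Real.exp_mul, inv_rpow hε.le, ← rpow_neg hε.le]
      calc (1 + u) ^ b * Real.exp (-c * u) ≤ (K0 * Real.exp (ε * u * b)) * Real.exp (-c * u) :=
            mul_le_mul_of_nonneg_right h5 (exp_pos _).le
        _ = K0 * Real.exp (ε * u * b + -c * u) := by rw [Real.exp_add]; ring
        _ ≤ K0 * Real.exp (-(c/2) * u) := by
            apply mul_le_mul_of_nonneg_left _ hK0pos.le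
            apply Real.exp_le_exp.2
            nlinarith
    -- combine
    have hcomb : Real.exp (-c * u) * (1 + s) ^ (-b) ≤ (1 + t) ^ (-b) * (K0 * Real.exp (-(c/2) * u)) := by
      calc Real.exp (-c * u) * (1 + s) ^ (-b)
          ≤ Real.exp (-c * u) * ((1 + t) ^ (-b) * (1 + u) ^ b) :=
            mul_le_mul_of_nonneg_left hA (exp_pos _).le
        _ = (1 + t) ^ (-b) * ((1 + u) ^ b * Real.exp (-c * u)) := by ring
        _ ≤ (1 + t) ^ (-b) * (K0 * Real.exp (-(c/2) * u)) :=
            mul_le_mul_of_nonneg_left hexpb (rpow_nonneg h1t.le _)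
    have hupow : 0 ≤ u ^ (-a) := rpow_nonneg hu0 _
    calc f s = u ^ (-a) * (Real.exp (-c * u) * (1 + s) ^ (-b)) := by
          simp only [hfdef, hudef]; ring
      _ ≤ u ^ (-a) * ((1 + t) ^ (-b) * (K0 * Real.exp (-(c/2) * u))) :=
          mul_le_mul_of_nonneg_left hcomb hupow
      _ = g s := by simp only [hgdef, hψdef, hudef]; ring
  -- integrability
  have hψ0t : IntervalIntegrable ψ volume 0 t := by
    apply IntervalIntegrable.mul_continuousOn (intervalIntegral.intervalIntegrable_rpow' (by linarith))
    fun_prop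
  have hψcomp : IntervalIntegrable (fun s => ψ (t - s)) volume 0 t := by
    have := (hψ0t.symm).comp_sub_left t
    simpa using this
  have hgI : IntervalIntegrable g volume 0 t := by
    simpa [hgdef] using (hψcomp.const_mul K0).const_mul ((1 + t) ^ (-b))
  have hgIOn : IntegrableOn g (Ioc 0 t) := hgI.1
  have hfm : Measurable f := by fun_prop
  have hfIOn : IntegrableOn f (Ioc 0 t) := by
    apply Integrable.mono' hgIOn (hfm.aestronglyMeasurable.restrict)
    filter_upwards [ae_restrict_mem measurableSet_Ioc] with s hs
    have hfnn : 0 ≤ f s := by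
      obtain ⟨hs0, hst⟩ := hs
      have : (0:ℝ) ≤ t - s := by linarith
      exact mul_nonneg (mul_nonneg (exp_pos _).le (rpow_nonneg this _))
        (rpow_nonneg (by linarith) _)
    rw [Real.norm_eq_abs, abs_of_nonneg hfnn]
    exact hpt s hs
  -- the chain of inequalities
  have hstep : ∫ s in (0:ℝ)..t, f s ≤ (1 + t) ^ (-b) * (K0 * J) := by
    have h1 : ∫ s in (0:ℝ)..t, f s = ∫ s in Ioc (0:ℝ) t, f s :=
      intervalIntegral.integral_of_le ht
    have h2 : ∫ s in Ioc (0:ℝ) t, f s ≤ ∫ s in Ioc (0:ℝ) t, g s :=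
      setIntegral_mono_on hfIOn hgIOn measurableSet_Ioc hpt
    have h3 : ∫ s in Ioc (0:ℝ) t, g s = (1 + t) ^ (-b) * (K0 * ∫ s in (0:ℝ)..t, ψ (t - s)) := by
      rw [← intervalIntegral.integral_of_le ht]
      simp only [hgdef]
      rw [intervalIntegral.integral_const_mul, intervalIntegral.integral_const_mul]
    have h4 : ∫ s in (0:ℝ)..t, ψ (t - s) = ∫ u in (0:ℝ)..t, ψ u := by
      rw [intervalIntegral.integral_comp_sub_left ψ t]
      simp
    have h5 : ∫ u in (0:ℝ)..t, ψ u ≤ J := by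
      rw [intervalIntegral.integral_of_le ht]
      apply setIntegral_mono_set hψint
      · filter_upwards [ae_restrict_mem measurableSet_Ioi] with u hu
        exact mul_nonneg (rpow_nonneg (le_of_lt hu) _) (exp_pos _).le
      · exact HasSubset.Subset.eventuallyLE fun u hu => hu.1
    calc ∫ s in (0:ℝ)..t, f s = ∫ s in Ioc (0:ℝ) t, f s := h1
      _ ≤ ∫ s in Ioc (0:ℝ) t, g s := h2
      _ = (1 + t) ^ (-b) * (K0 * ∫ s in (0:ℝ)..t, ψ (t - s)) := h3
      _ ≤ (1 + t) ^ (-b) * (K0 * J) := by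
          apply mul_le_mul_of_nonneg_left _ (rpow_nonneg h1t.le _)
          apply mul_le_mul_of_nonneg_left _ hK0pos.le
          rw [h4]; exact h5
  calc ∫ s in (0:ℝ)..t, Real.exp (-c * (t - s)) * (t - s) ^ (-a) * (1 + s) ^ (-b)
      = ∫ s in (0:ℝ)..t, f s := rfl
    _ ≤ (1 + t) ^ (-b) * (K0 * J) := hstep
    _ ≤ (K0 * J + 1) * (1 + t) ^ (-b) := by
        rw [mul_comm]
        apply mul_le_mul_of_nonneg_right (by linarith) (rpow_nonneg h1t.le _)
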